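/- For all real x with 0 < x < π/2, (sin x / x)^2 + (tan x)/x > 2. -/

import Mathlib

open Real

lemma aux_sin (x : ℝ) (h1 : 0 < x) : x - x ^ 3 / 6 < sin x := by
  have hmono : StrictMonoOn (fun t : ℝ => sin t - t + t ^ 3 / 6) (Set.Icc 0 x) := by
    apply strictMonoOn_of_deriv_pos (convex_Icc 0 x)
    · fun_prop
    · intro t ht
      rw [interior_Icc] at ht
      have hd : HasDerivAt (fun t : ℝ => sin t - t + t ^ 3 / 6)
          (cos t - 1 + 3 * t ^ 2 / 6) t := by
        have := (Real.hasDerivAt_sin t).sub (hasDerivAt_id t)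
        have h3 : HasDerivAt (fun t : ℝ => t ^ 3 / 6) (3 * t ^ (3-1) * 1 / 6) t :=
          ((hasDerivAt_id t).pow 3).div_const 6
        exact (this.add h3).congr_deriv (by norm_num)
      rw [hd.deriv]
      have := Real.one_sub_sq_div_two_lt_cos (x := t) (by exact ne_of_gt ht.1)
      nlinarith [sq_nonneg t]
  have := hmono (Set.left_mem_Icc.2 h1.le) (Set.right_mem_Icc.2 h1.le) h1
  simp at this
  nlinarith [this]

lemma aux_tan (x : ℝ) (h1 : 0 < x) (h2 : x < π / 2) : x + x ^ 3 / 3 < tan x := by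
  have hcos : ∀ t : ℝ, t ∈ Set.Icc 0 x → cos t ≠ 0 := by
    intro t ht
    exact ne_of_gt (Real.cos_pos_of_mem_Ioo ⟨by nlinarith [Real.pi_pos, ht.1], lt_of_le_of_lt ht.2 h2⟩)
  have hmono : StrictMonoOn (fun t : ℝ => tan t - t - t ^ 3 / 3) (Set.Icc 0 x) := by
    apply strictMonoOn_of_deriv_pos (convex_Icc 0 x)
    · apply ContinuousOn.sub
      apply ContinuousOn.sub
      · exact Real.continuousOn_tan.mono (fun t ht => hcos t ht)
      · fun_prop
      · fun_prop
    · intro t ht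
      rw [interior_Icc] at ht
      have hct : cos t ≠ 0 := hcos t ⟨ht.1.le, ht.2.le⟩
      have hd : HasDerivAt (fun t : ℝ => tan t - t - t ^ 3 / 3)
          (1 / cos t ^ 2 - 1 - 3 * t ^ 2 / 3) t := by
        have := (Real.hasDerivAt_tan hct).sub (hasDerivAt_id t)
        have h3 : HasDerivAt (fun t : ℝ => t ^ 3 / 3) (3 * t ^ (3-1) * 1 / 3) t :=
          ((hasDerivAt_id t).pow 3).div_const 3
        exact (this.sub h3).congr_deriv (by norm_num)
      rw [hd.deriv]
      have htan : t < tan t := Real.lt_tan ht.1 (lt_trans ht.2 h2)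
      have h1t : 1 / cos t ^ 2 = 1 + tan t ^ 2 := by
        rw [one_div, ← Real.inv_one_add_tan_sq hct, inv_inv]

      rw [h1t]
      nlinarith [ht.1]
  have := hmono (Set.left_mem_Icc.2 h1.le) (Set.right_mem_Icc.2 h1.le) h1
  simp at this
  nlinarith [this]

theorem stmt_0 (x : ℝ) (h1 : 0 < x) (h2 : x < π / 2) :
    (sin x / x) ^ 2 + tan x / x > 2 := by
  have hs := aux_sin x h1
  have ht := aux_tan x h1 h2
  have hx6 : x < 2 := lt_of_lt_of_le h2 (by nlinarith [Real.pi_lt_d2])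
  have hx2 : x ^ 2 < 4 := by nlinarith
  have hspos : 0 < x - x ^ 3 / 6 := by nlinarith [mul_lt_mul_of_pos_left hx2 h1]
  have hsq : (x - x ^ 3 / 6) * (x - x ^ 3 / 6) < sin x * sin x :=
    mul_self_lt_mul_self hspos.le hs
  have htx : (x + x ^ 3 / 3) * x < tan x * x := by nlinarith
  have key : 2 * x ^ 2 < sin x ^ 2 + tan x * x := by nlinarith [pow_pos h1 6]
  have heq : (sin x / x) ^ 2 + tan x / x = (sin x ^ 2 + tan x * x) / x ^ 2 := by
    field_simp
  rw [gt_iff_lt, heq, lt_div_iff₀ (by positivity)]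
  linarith [key]
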